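/- If a simple graph G on a finite vertex set is Gaussian, then for every vertex v the smoothing G' = (G*v) ∖ v is Gaussian. -/

import Mathlib

open scoped Classical

/-- The local complement `G*c` of a simple graph `G` at a vertex `c`: distinct
vertices `u`, `v` are adjacent in `G*c` iff (`u ~ v` in `G`) XOR (`u` and `v` are
both neighbours of `c` in `G`). -/
def localComplement {V : Type*} (G : SimpleGraph V) (c : V) : SimpleGraph V where
  Adj u v := u ≠ v ∧ Xor' (G.Adj u v) (G.Adj c u ∧ G.Adj c v)
  symm := ⟨by
    rintro u v ⟨h, hx⟩
    refine ⟨h.symm, ?_⟩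
    rwa [G.adj_comm v u, and_comm]⟩
  loopless := ⟨fun u h => h.1 rfl⟩

/-- The smoothing of `G` at `v`: the induced subgraph of the local complement `G*v`
on the set of vertices different from `v`. -/
def smoothing {V : Type*} (G : SimpleGraph V) (v : V) : SimpleGraph {x : V | x ≠ v} :=
  SimpleGraph.induce {x : V | x ≠ v} (localComplement G v)

/-- Adjacency function of a simple graph, with values in `ZMod 2`:
`adjE G x y = 1` iff `x` and `y` are adjacent. -/
noncomputable def adjE {V : Type*} (G : SimpleGraph V) (x y : V) : ZMod 2 :=
  if G.Adj x y then 1 else 0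

/-- The Rosenstiehl form `R x y = E x y + card (N(x) ∩ N(y))` in `ZMod 2`. -/
noncomputable def rosForm {V : Type*} (G : SimpleGraph V) (x y : V) : ZMod 2 :=
  adjE G x y + ((G.neighborSet x ∩ G.neighborSet y).ncard : ZMod 2)

/-- (EN1): every vertex has even degree. -/
def EN1 {V : Type*} (G : SimpleGraph V) : Prop :=
  ∀ x : V, Even (G.neighborSet x).ncard

/-- (EN2): distinct non-adjacent vertices share an even number of neighbours. -/
def EN2 {V : Type*} (G : SimpleGraph V) : Prop :=
  ∀ x y : V, x ≠ y → ¬ G.Adj x y → Even ((G.neighborSet x ∩ G.neighborSet y).ncard)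

/-- (RC): the Rosenstiehl form is a coboundary on the edges. -/
def RC {V : Type*} (G : SimpleGraph V) : Prop :=
  ∃ χ : V → ZMod 2, ∀ x y : V, G.Adj x y → rosForm G x y = χ x + χ y

/-- A graph is Gaussian when it satisfies (EN1), (EN2) and (RC). -/
def Gaussian {V : Type*} (G : SimpleGraph V) : Prop :=
  EN1 G ∧ EN2 G ∧ RC G

/-! ### auxiliary lemmas -/

noncomputable def nsum {V : Type*} [Fintype V] (G : SimpleGraph V) (x y : V) : ZMod 2 :=
  ∑ z : V, adjE G x z * adjE G y z

noncomputable def dsum {V : Type*} [Fintype V] (G : SimpleGraph V) (x : V) : ZMod 2 :=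
  ∑ z : V, adjE G x z

lemma zmod2_sq : ∀ u : ZMod 2, u * u = u := by decide

lemma adjE_comm {V : Type*} (G : SimpleGraph V) (x y : V) : adjE G x y = adjE G y x := by
  unfold adjE; rw [SimpleGraph.adj_comm]

lemma adjE_self {V : Type*} (G : SimpleGraph V) (x : V) : adjE G x x = 0 := by
  simp [adjE]

lemma even_iff_cast_zero (n : ℕ) : Even n ↔ (n : ZMod 2) = 0 := by
  rw [ZMod.natCast_eq_zero_iff, even_iff_two_dvd]

lemma ncard_inter_cast {W : Type*} [Fintype W] (H : SimpleGraph W) (x y : W) :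
    (((H.neighborSet x ∩ H.neighborSet y).ncard : ZMod 2)) = nsum H x y := by
  have h : (H.neighborSet x ∩ H.neighborSet y) =
      ↑(Finset.univ.filter fun z => H.Adj x z ∧ H.Adj y z) := by
    ext z; simp [SimpleGraph.neighborSet]
  rw [h, Set.ncard_coe_finset, Finset.card_filter, Nat.cast_sum]
  unfold nsum adjE
  refine Finset.sum_congr rfl fun z _ => ?_
  split_ifs <;> simp_all

lemma ncard_nbhd_cast {W : Type*} [Fintype W] (H : SimpleGraph W) (x : W) :
    (((H.neighborSet x).ncard : ZMod 2)) = dsum H x := by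
  have h : (H.neighborSet x) = ↑(Finset.univ.filter fun z => H.Adj x z) := by
    ext z; simp [SimpleGraph.neighborSet]
  rw [h, Set.ncard_coe_finset, Finset.card_filter, Nat.cast_sum]
  unfold dsum adjE
  refine Finset.sum_congr rfl fun z _ => ?_
  split_ifs <;> simp_all

lemma nsum_self {V : Type*} [Fintype V] (G : SimpleGraph V) (x : V) :
    nsum G x x = dsum G x := by
  unfold nsum dsum
  exact Finset.sum_congr rfl fun z _ => zmod2_sq _

lemma nsum_comm {V : Type*} [Fintype V] (G : SimpleGraph V) (x y : V) :
    nsum G x y = nsum G y x := by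
  unfold nsum
  exact Finset.sum_congr rfl fun z _ => mul_comm _ _

lemma adjE_lc {V : Type*} (G : SimpleGraph V) (v x z : V) :
    adjE (localComplement G v) x z =
      adjE G x z + adjE G v x * adjE G v z
        + adjE G v x * (if z = x then 1 else 0) := by
  have hadj : (localComplement G v).Adj x z ↔
      (x ≠ z ∧ Xor' (G.Adj x z) (G.Adj v x ∧ G.Adj v z)) := Iff.rfl
  by_cases hzx : z = x
  · subst hzx
    simp only [adjE, hadj, if_pos rfl, ne_eq, not_true_eq_false, false_and, if_false,
      SimpleGraph.irrefl, if_neg (G.loopless.irrefl z)]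
    split_ifs <;> decide
  · have hxz : x ≠ z := fun h => hzx h.symm
    by_cases h1 : G.Adj x z <;> by_cases h2 : G.Adj v x <;> by_cases h3 : G.Adj v z <;>
      simp [adjE, hadj, hxz, hzx, h1, h2, h3, Xor'] <;> decide

lemma adjE_smoothing {V : Type*} (G : SimpleGraph V) (v : V) (a b : {x : V | x ≠ v}) :
    adjE (smoothing G v) a b = adjE (localComplement G v) ↑a ↑b := by
  unfold adjE
  exact if_congr Iff.rfl rfl rfl

lemma sub_eq_add_zmod2 : ∀ u w : ZMod 2, u - w = u + w := by decide

lemma zmod2_add_self : ∀ u : ZMod 2, u + u = 0 := by decide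

lemma sum_subtype_ne {V : Type*} [Fintype V] (v : V) (f : V → ZMod 2) :
    ∑ z : {x : V | x ≠ v}, f ↑z = (∑ z : V, f z) + f v := by
  have h1 : ∑ z ∈ Finset.univ.erase v, f z = ∑ z : {x : V | x ≠ v}, f ↑z :=
    Finset.sum_subtype _ (fun x => by simp [Set.mem_setOf_eq]) f
  rw [← h1, ← Finset.add_sum_erase Finset.univ f (Finset.mem_univ v), add_right_comm,
    zmod2_add_self, zero_add]

lemma expand_id : ∀ a b p q r dx dy : ZMod 2,
    (p + a*q + a*dx) * (r + b*q + b*dy) =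
      p*r + b*(p*q) + a*(q*r) + a*b*q + b*(p*dy) + a*(dx*r)
        + a*b*(q*dy) + a*b*(dx*q) + a*b*(dx*dy) := by decide

lemma zmod2_reconcile : ∀ n1 n2 n3 d a b E dl : ZMod 2,
    n1 + b*n2 + a*n3 + a*b*d + b*E + a*E + a*b*b + a*b*a + a*b*dl + a*b
      = n1 + b*n2 + a*n3 + a*b*d + (a+b)*E + a*b*(dl+1) := by decide

lemma master {V : Type*} [Fintype V] (G : SimpleGraph V) (v x y : V) (hx : x ≠ v) (hy : y ≠ v) :
    ((((smoothing G v).neighborSet ⟨x, hx⟩ ∩ (smoothing G v).neighborSet ⟨y, hy⟩).ncard : ZMod 2)) =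
      nsum G x y + adjE G v y * nsum G x v + adjE G v x * nsum G v y
        + adjE G v x * adjE G v y * dsum G v
        + (adjE G v x + adjE G v y) * adjE G x y
        + adjE G v x * adjE G v y * ((if x = y then (1:ZMod 2) else 0) + 1) := by
  rw [ncard_inter_cast]
  show (∑ z : {w : V | w ≠ v}, adjE (smoothing G v) ⟨x, hx⟩ z * adjE (smoothing G v) ⟨y, hy⟩ z) = _
  have h1 : ∀ z : {w : V | w ≠ v},
      adjE (smoothing G v) ⟨x, hx⟩ z * adjE (smoothing G v) ⟨y, hy⟩ z
        = adjE (localComplement G v) x ↑z * adjE (localComplement G v) y ↑z := by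
    intro z; rw [adjE_smoothing, adjE_smoothing]
  rw [Finset.sum_congr rfl (fun z _ => h1 z)]
  rw [sum_subtype_ne v (fun w => adjE (localComplement G v) x w * adjE (localComplement G v) y w)]
  have hbdry : adjE (localComplement G v) x v * adjE (localComplement G v) y v
      = adjE G v x * adjE G v y := by
    rw [adjE_lc, adjE_lc, adjE_self, if_neg (Ne.symm hx), if_neg (Ne.symm hy),
      adjE_comm G x v, adjE_comm G y v]
    ring
  rw [hbdry]
  have hterm : ∀ w : V, adjE (localComplement G v) x w * adjE (localComplement G v) y w =
      adjE G x w * adjE G y w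
      + adjE G v y * (adjE G x w * adjE G v w)
      + adjE G v x * (adjE G v w * adjE G y w)
      + adjE G v x * adjE G v y * adjE G v w
      + adjE G v y * (adjE G x w * (if w = y then 1 else 0))
      + adjE G v x * ((if w = x then 1 else 0) * adjE G y w)
      + adjE G v x * adjE G v y * (adjE G v w * (if w = y then 1 else 0))
      + adjE G v x * adjE G v y * ((if w = x then 1 else 0) * adjE G v w)
      + adjE G v x * adjE G v y * ((if w = x then 1 else 0) * (if w = y then 1 else 0)) := by
    intro w
    rw [adjE_lc G v x w, adjE_lc G v y w]
    exact expand_id _ _ _ _ _ _ _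
  rw [Finset.sum_congr rfl (fun w _ => hterm w)]
  simp only [Finset.sum_add_distrib, ← Finset.mul_sum]
  simp only [mul_ite, ite_mul, mul_one, mul_zero, one_mul, zero_mul,
    Finset.sum_ite_eq', Finset.mem_univ, if_true]
  rw [adjE_comm G y x]
  have hdl : (if y = x then adjE G v x * adjE G v y else 0)
      = adjE G v x * adjE G v y * (if x = y then (1:ZMod 2) else 0) := by
    by_cases h : x = y
    · subst h; simp
    · rw [if_neg (fun hh => h hh.symm), if_neg h, mul_zero]
  rw [hdl]
  unfold nsum dsum
  generalize (∑ z : V, adjE G x z * adjE G y z) = n1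
  generalize (∑ z : V, adjE G x z * adjE G v z) = n2
  generalize (∑ z : V, adjE G v z * adjE G y z) = n3
  generalize (∑ z : V, adjE G v z) = d
  generalize (if x = y then (1:ZMod 2) else 0) = dl
  generalize adjE G x y = E
  generalize adjE G v x = a
  generalize adjE G v y = b
  revert n1 n2 n3 d dl E a b
  decide

/-- If `G` is Gaussian then so is its smoothing `(G*v) ∖ v` at every vertex `v`. -/
theorem stmt15 {V : Type*} [Fintype V] (G : SimpleGraph V) (hG : Gaussian G) (v : V) :
    Gaussian (smoothing G v) := by
  obtain ⟨h1, h2, χ, h3⟩ := hG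
  have hd : ∀ x : V, dsum G x = 0 := fun x => by
    rw [← ncard_nbhd_cast, ← even_iff_cast_zero]; exact h1 x
  have hn : ∀ p q : V, p ≠ q → nsum G p q = adjE G p q * (χ p + χ q + 1) := by
    intro p q hpq
    by_cases h : G.Adj p q
    · have h4 := h3 p q h
      rw [rosForm, ncard_inter_cast] at h4
      have hE : adjE G p q = 1 := if_pos h
      rw [hE] at h4
      rw [hE, one_mul, ← h4, add_right_comm, zmod2_add_self, zero_add]
    · have hE : adjE G p q = 0 := if_neg h
      rw [hE, zero_mul, ← ncard_inter_cast, ← even_iff_cast_zero]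
      exact h2 p q hpq h
  refine ⟨?_, ?_, ?_⟩
  · -- EN1
    rintro ⟨x, hx⟩
    rw [even_iff_cast_zero,
      show (smoothing G v).neighborSet ⟨x, hx⟩
          = (smoothing G v).neighborSet ⟨x, hx⟩ ∩ (smoothing G v).neighborSet ⟨x, hx⟩ from
        (Set.inter_self _).symm,
      master G v x x hx hx, nsum_self, hd x, hn x v hx, hn v x (Ne.symm hx), hd v,
      adjE_comm G x v, adjE_self, if_pos rfl]
    generalize adjE G v x = a
    generalize χ x = cx
    generalize χ v = cv
    revert a cx cv
    decide
  · -- EN2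
    rintro ⟨x, hx⟩ ⟨y, hy⟩ hne hnadj
    have hxy : x ≠ y := fun h => hne (Subtype.ext h)
    have hnx : ¬ Xor' (G.Adj x y) (G.Adj v x ∧ G.Adj v y) := fun hxor => hnadj ⟨hxy, hxor⟩
    have hE : adjE G x y = adjE G v x * adjE G v y := by
      by_cases hq1 : G.Adj x y <;> by_cases hq2 : G.Adj v x <;> by_cases hq3 : G.Adj v y <;>
        simp [adjE, Xor', hq1, hq2, hq3] at hnx ⊢ <;> tauto
    rw [even_iff_cast_zero, master G v x y hx hy, hn x y hxy, hn x v hx, hn v y (Ne.symm hy),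
      hd v, adjE_comm G x v, if_neg hxy, hE]
    generalize adjE G v x = a
    generalize adjE G v y = b
    generalize χ x = cx
    generalize χ y = cy
    generalize χ v = cv
    revert a b cx cy cv
    decide
  · -- RC
    refine ⟨fun z => χ ↑z + adjE G v ↑z, ?_⟩
    rintro ⟨x, hx⟩ ⟨y, hy⟩ hadj
    have hxy : x ≠ y := hadj.1
    have hxor : Xor' (G.Adj x y) (G.Adj v x ∧ G.Adj v y) := hadj.2
    have hE1 : adjE G x y + adjE G v x * adjE G v y = 1 := by
      by_cases hq1 : G.Adj x y <;> by_cases hq2 : G.Adj v x <;> by_cases hq3 : G.Adj v y <;>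
        simp [adjE, Xor', hq1, hq2, hq3] at hxor ⊢ <;> tauto
    have hE' : adjE (smoothing G v) ⟨x, hx⟩ ⟨y, hy⟩
        = adjE G x y + adjE G v x * adjE G v y := by
      rw [adjE_smoothing, adjE_lc, if_neg (fun h : y = x => hxy h.symm), mul_zero, add_zero]
    show rosForm (smoothing G v) ⟨x, hx⟩ ⟨y, hy⟩ = (χ x + adjE G v x) + (χ y + adjE G v y)
    rw [rosForm, master G v x y hx hy, hE', hn x y hxy, hn x v hx, hn v y (Ne.symm hy),
      hd v, adjE_comm G x v, if_neg hxy]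
    revert hE1
    generalize adjE G x y = E
    generalize adjE G v x = a
    generalize adjE G v y = b
    generalize χ x = cx
    generalize χ y = cy
    generalize χ v = cv
    revert E a b cx cy cv
    decide
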